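/- arXiv:1711.02399 — 3 statements merged into one kernel-verified Lean document; each statement's English description precedes it below -/
import Mathlib

section
/- Let x : ℕ → ℕ → ℕ → ℕ be defined by the recursion x(i,0,0) = 1, x(i,0,ℓ) = 0 for ℓ ≥ 1, and, for all n ≥ 0: x(i,n+1,ℓ) = x(i,n,ℓ) if n and i have the same parity, while x(i,n+1,ℓ) = x(i,n,ℓ) + x(i+1,n,ℓ-1) (with x(i+1,n,-1) interpreted as 0) if n and i have different parities. Then for all i ≥ n and all 0 ≤ ℓ ≤ n with i + ℓ even, x(i,n,ℓ) ≡ choose(ℓ + ⌊(n-ℓ)/2⌋, ℓ) (mod 2). -/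
/-- The coefficients `x(i,n,ℓ)` of the coordinate-change formula for tame
`ℤ/2`-equivariant formal group laws (Lemma 3.5). -/
def xcoef : ℕ → ℕ → ℕ → ℕ
  | _, 0, 0 => 1
  | _, 0, _ + 1 => 0
  | i, n + 1, ℓ =>
      if n % 2 = i % 2 then xcoef i n ℓ
      else xcoef i n ℓ + (if ℓ = 0 then 0 else xcoef (i + 1) n (ℓ - 1))

lemma xcoef_zero (n : ℕ) : ∀ i ℓ, n < ℓ → xcoef i n ℓ = 0 := by
  induction n with
  | zero => intro i ℓ h; match ℓ, h with | k+1, _ => rfl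
  | succ n ih =>
      intro i ℓ h
      have h1 : xcoef i n ℓ = 0 := ih i ℓ (by omega)
      have h2 : (if ℓ = 0 then 0 else xcoef (i + 1) n (ℓ - 1)) = 0 := by
        rcases Nat.eq_zero_or_pos ℓ with h0 | h0
        · simp [h0]
        · rw [if_neg (by omega)]; exact ih (i+1) (ℓ-1) (by omega)
      rw [xcoef]
      split <;> simp [h1, h2]

theorem stmt_0 (i n ℓ : ℕ) (hin : n ≤ i) (hℓ : ℓ ≤ n) (hpar : (i + ℓ) % 2 = 0) :
    xcoef i n ℓ % 2 = Nat.choose (ℓ + (n - ℓ) / 2) ℓ % 2 := by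
  induction n generalizing i ℓ with
  | zero =>
      interval_cases ℓ
      rfl
  | succ n ih =>
      rw [xcoef]
      by_cases h : n % 2 = i % 2
      · rw [if_pos h]
        -- same parity: ℓ ≤ n and (n+1-ℓ)/2 = (n-ℓ)/2
        have hln : ℓ ≤ n := by omega
        have hdiv : (n + 1 - ℓ) / 2 = (n - ℓ) / 2 := by omega
        rw [hdiv]
        exact ih i ℓ (by omega) hln hpar
      · rw [if_neg h]
        rcases Nat.eq_zero_or_pos ℓ with h0 | h0
        · subst h0
          simp only [if_pos rfl, Nat.add_zero, Nat.choose_zero_right]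
          have := ih i 0 (by omega) (by omega) (by omega)
          simpa using this
        · rw [if_neg (by omega)]
          have hpar' : (i + 1 + (ℓ - 1)) % 2 = 0 := by omega
          have ihr := ih (i+1) (ℓ-1) (by omega) (by omega) hpar'
          rcases Nat.lt_or_ge n ℓ with hc | hc
          · -- ℓ = n + 1
            have hl : ℓ = n + 1 := by omega
            rw [xcoef_zero n i ℓ (by omega)]
            rw [Nat.zero_add, ihr, hl]
            norm_num
          · -- ℓ ≤ n, use Pascal
            have ihl := ih i ℓ (by omega) hc (by omega)
            have hd1 : ℓ + (n + 1 - ℓ) / 2 = (ℓ + (n - ℓ) / 2) + 1 := by omega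
            have hd2 : ℓ - 1 + (n - (ℓ - 1)) / 2 = ℓ + (n - ℓ) / 2 := by omega
            rw [hd1]
            obtain ⟨m, rfl⟩ : ∃ m, ℓ = m + 1 := ⟨ℓ - 1, by omega⟩
            have hp : (m + 1 + (n - (m + 1)) / 2 + 1).choose (m + 1)
                = (m + 1 + (n - (m + 1)) / 2).choose m
                  + (m + 1 + (n - (m + 1)) / 2).choose (m + 1) := by
              simpa using Nat.choose_succ_succ (m + 1 + (n - (m + 1)) / 2) m
            simp only [Nat.add_sub_cancel] at ihr hd2 ⊢
            rw [Nat.add_mod, ihl, ihr, hd2, hp,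
              Nat.add_mod ((m + 1 + (n - (m + 1)) / 2).choose m), Nat.add_comm]
end

section
/- Let n and ℓ be natural numbers of different parities with 1 ≤ ℓ ≤ n. Then choose(ℓ + ⌊(n-ℓ)/2⌋, ℓ) + choose(ℓ-1 + ⌊(n-(ℓ-1))/2⌋, ℓ-1) ≡ choose(ℓ + ⌊((n+1)-ℓ)/2⌋, ℓ) (mod 2). -/
theorem stmt_1 (n ℓ : ℕ) (h1 : 1 ≤ ℓ) (h2 : ℓ ≤ n) (hpar : n % 2 ≠ ℓ % 2) :
    (Nat.choose (ℓ + (n - ℓ) / 2) ℓ + Nat.choose (ℓ - 1 + (n - (ℓ - 1)) / 2) (ℓ - 1)) % 2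
      = Nat.choose (ℓ + (n + 1 - ℓ) / 2) ℓ % 2 := by
  obtain ⟨m, rfl⟩ : ∃ m, ℓ = m + 1 := ⟨ℓ - 1, by omega⟩
  obtain ⟨k, hk⟩ : ∃ k, n - (m + 1) = 2 * k + 1 := ⟨(n - (m+1)) / 2, by omega⟩
  have e1 : (n - (m + 1)) / 2 = k := by omega
  have e2 : (n - (m + 1 - 1)) / 2 = k + 1 := by omega
  have e3 : (n + 1 - (m + 1)) / 2 = k + 1 := by omega
  rw [e1, e2, e3]
  have : m + 1 + (k + 1) = (m + 1 + k) + 1 := by ring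
  rw [this, Nat.choose_succ_succ]
  have : m + 1 - 1 + (k + 1) = m + 1 + k := by omega
  rw [this]
  simp only [Nat.add_sub_cancel, Nat.succ_eq_add_one]
  omega
end

section
/- Let R be a commutative ring, e ∈ R, and r : ℕ × ℕ → R a family of elements satisfying: (1) 2·r(p,q) = 0 for all p,q; (2) r(p,q) = e^{2^q}·r(p,q+1) for all p,q; (3) r(p,q) = e^{2^p}·r(p+1,q) for all p,q; (4) e·r(0,q) = 0 for all q ≥ 1. Then r(p,q) = 0 for all p,q with min(p,q) ≤ max(p,q) and max(p,q) ≥ 1 — in fact r(p,q) = 0 for all p, q with q ≥ 1 or p ≥ 1. -/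
theorem stmt_12 (R : Type*) [CommRing R] (e : R) (r : ℕ → ℕ → R)
    (h1 : ∀ p q, 2 • r p q = 0)
    (h2 : ∀ p q, r p q = e ^ (2 ^ q) * r p (q + 1))
    (h3 : ∀ p q, r p q = e ^ (2 ^ p) * r (p + 1) q)
    (h4 : ∀ q, 1 ≤ q → e * r 0 q = 0) :
    ∀ p q, 1 ≤ p ∨ 1 ≤ q → r p q = 0 := by
  -- Lemma B: raise q
  have hB : ∀ p q q', q ≤ q' → r p q = e ^ (2 ^ q' - 2 ^ q) * r p q' := by
    intro p q q' hq
    induction q' , hq using Nat.le_induction with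
    | base => simp
    | succ n hn ih =>
      have hle : 2 ^ q ≤ 2 ^ n := Nat.pow_le_pow_right (by norm_num) hn
      have hexp : 2 ^ (n + 1) - 2 ^ q = (2 ^ n - 2 ^ q) + 2 ^ n := by
        rw [pow_succ, Nat.mul_two, Nat.sub_add_comm hle]
      rw [ih, h2 p n, ← mul_assoc, ← pow_add, hexp]
  -- Claim C: r p q = e^k * r 0 m with k, m ≥ 1
  have hC : ∀ p q, ∃ k m, 1 ≤ k ∧ 1 ≤ m ∧ r p q = e ^ k * r 0 m := by
    intro p
    induction p with
    | zero =>
      intro q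
      exact ⟨2 ^ q, q + 1, Nat.one_le_two_pow, Nat.le_add_left 1 q, h2 0 q⟩
    | succ p ih =>
      intro q
      set M := max q p with hM
      obtain ⟨k, m, hk, hm, hr⟩ := ih (M + 1)
      refine ⟨(2 ^ M - 2 ^ q) + (2 ^ M - 2 ^ p) + k, m, by omega, hm, ?_⟩
      have step1 : r (p + 1) q = e ^ (2 ^ M - 2 ^ q) * r (p + 1) M :=
        hB (p + 1) q M (le_max_left q p)
      have hpM : 2 ^ p ≤ 2 ^ M := Nat.pow_le_pow_right (by norm_num) (le_max_right q p)
      have step2 : r (p + 1) M = e ^ (2 ^ M - 2 ^ p) * r p (M + 1) := by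
        have hexp : (2 ^ M - 2 ^ p) + 2 ^ p = 2 ^ M := Nat.sub_add_cancel hpM
        rw [h2 (p + 1) M, h3 p (M + 1), ← mul_assoc, ← pow_add, hexp]
      rw [step1, step2, hr, ← mul_assoc, ← mul_assoc, ← pow_add, ← pow_add]
  intro p q _
  obtain ⟨k, m, hk, hm, hr⟩ := hC p q
  rw [hr, show k = (k - 1) + 1 by omega, pow_succ, mul_assoc, h4 m hm, mul_zero]
end
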